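/- Let (N,τ) be a finite von Neumann algebra, H a Hilbert N-bimodule, ξ ∈ H a vector bounded from the right, and φ = φ_{(H,ξ)} the associated completely positive map on N (so that τ(φ(x)y) = ⟨xξy, ξ⟩). Then for every unitary u ∈ N: ‖φ(u) − u‖₂² ≤ ‖[u,ξ]‖² + (‖φ(1)‖₂² − 1), provided ‖ξ‖ = 1. -/

import Mathlib

/- Common framework: a finite von Neumann algebra is encoded as a unital complex
`*`-algebra `A` together with a faithful (tracial) state `τ`.  Positivity of elements,
complete positivity of maps and the trace 2-norm are defined below. -/

open scoped ComplexOrder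

/-- An element of a `*`-algebra is positive if it is of the form `y* y`. -/
def IsPosElem {A : Type*} [Ring A] [StarRing A] (x : A) : Prop := ∃ y : A, x = star y * y

/-- A linear map is completely positive if all of its matrix amplifications
preserve positivity. -/
def IsCPMap {A : Type*} [Ring A] [StarRing A] [Algebra ℂ A] (φ : A →ₗ[ℂ] A) : Prop :=
  ∀ (n : ℕ) (x : Matrix (Fin n) (Fin n) A),
    (∃ y : Matrix (Fin n) (Fin n) A, x = star y * y) →
      ∃ y : Matrix (Fin n) (Fin n) A, x.map φ = star y * y

/-- A faithful tracial state on a `*`-algebra. -/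
structure IsFaithfulTracialState {A : Type*} [Ring A] [StarRing A] [Algebra ℂ A]
    (τ : A →ₗ[ℂ] ℂ) : Prop where
  tracial : ∀ x y : A, τ (x * y) = τ (y * x)
  pos : ∀ x : A, 0 ≤ τ (star x * x)
  faithful : ∀ x : A, τ (star x * x) = 0 → x = 0
  unital : τ 1 = 1

/-- The 2-norm `‖x‖₂ = τ(x* x)^{1/2}` associated to a trace. -/
noncomputable def trNorm2 {A : Type*} [Ring A] [StarRing A] [Algebra ℂ A]
    (τ : A →ₗ[ℂ] ℂ) (x : A) : ℝ := Real.sqrt (τ (star x * x)).re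

/-- let `H` be a Hilbert `N`-bimodule (commuting normal left action `L`
and right action `R`), `ξ ∈ H` a unit vector bounded from the right, and
`φ = φ_{(H,ξ)}` the associated completely positive map, characterized by
`τ(φ(x) y) = ⟨x ξ y, ξ⟩`.  Then for every unitary `u`:
`‖φ(u) - u‖₂² ≤ ‖[u,ξ]‖² + (‖φ(1)‖₂² - 1)`. -/
theorem stmt4 {A : Type*} [Ring A] [StarRing A] [Algebra ℂ A]
    (τ : A →ₗ[ℂ] ℂ) (hτ : IsFaithfulTracialState τ)
    {H : Type*} [NormedAddCommGroup H] [InnerProductSpace ℂ H] [CompleteSpace H]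
    (L R : A → H →L[ℂ] H)
    (hLmul : ∀ x y : A, L (x * y) = (L x).comp (L y)) (hL1 : L 1 = 1)
    (hLadd : ∀ x y : A, L (x + y) = L x + L y)
    (hLstar : ∀ (x : A) (ξ η : H), (inner ℂ (L x ξ) η : ℂ) = inner ℂ ξ (L (star x) η))
    (hRmul : ∀ x y : A, R (x * y) = (R y).comp (R x)) (hR1 : R 1 = 1)
    (hRadd : ∀ x y : A, R (x + y) = R x + R y)
    (hRstar : ∀ (x : A) (ξ η : H), (inner ℂ (R x ξ) η : ℂ) = inner ℂ ξ (R (star x) η))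
    (hLR : ∀ x y : A, (L x).comp (R y) = (R y).comp (L x))
    (ξ : H) (hξ : ‖ξ‖ = 1)
    (c : ℝ) (hbd : ∀ y : A, ‖R y ξ‖ ^ 2 ≤ c * (τ (star y * y)).re)
    (φ : A →ₗ[ℂ] A) (hφ : IsCPMap φ)
    (hφdef : ∀ x y : A, τ (φ x * y) = inner ℂ (L x (R y ξ)) ξ)
    (u : A) (hu : star u * u = 1 ∧ u * star u = 1) :
    (trNorm2 τ (φ u - u)) ^ 2 ≤ ‖L u ξ - R u ξ‖ ^ 2 + ((trNorm2 τ (φ 1)) ^ 2 - 1) := by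
  obtain ⟨hu1, hu2⟩ := hu
  have cyc := hτ.tracial
  have posre : ∀ x : A, 0 ≤ (τ (star x * x)).re := by
    intro x
    simpa using (Complex.le_def.mp (hτ.pos x)).1
  have hcomm : ∀ (x y : A) (η : H), R y (L x η) = L x (R y η) := by
    intro x y η
    have h := DFunLike.congr_fun (hLR x y) η
    simpa using h.symm
  have hLu : L (star u) (L u ξ) = ξ := by
    have h : L (star u * u) ξ = L (star u) (L u ξ) := by rw [hLmul]; rfl
    rw [hu1, hL1] at h
    simpa using h.symm
  have hRu : R (star u) (R u ξ) = ξ := by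
    have h : R (u * star u) ξ = R (star u) (R u ξ) := by rw [hRmul]; rfl
    rw [hu2, hR1] at h
    simpa using h.symm
  have hinner_xi : (inner ℂ ξ ξ : ℂ) = 1 := by
    rw [inner_self_eq_norm_sq_to_K, hξ]; norm_num
  have hnLu : ‖L u ξ‖ ^ 2 = 1 := by
    have h : (inner ℂ (L u ξ) (L u ξ) : ℂ) = 1 := by rw [hLstar, hLu, hinner_xi]
    have h2 := inner_self_eq_norm_sq (𝕜 := ℂ) (L u ξ)
    rw [h] at h2
    simpa using h2.symm
  have hnRu : ‖R u ξ‖ ^ 2 = 1 := by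
    have h : (inner ℂ (R u ξ) (R u ξ) : ℂ) = 1 := by rw [hRstar, hRu, hinner_xi]
    have h2 := inner_self_eq_norm_sq (𝕜 := ℂ) (R u ξ)
    rw [h] at h2
    simpa using h2.symm
  have hip : (inner ℂ (L u ξ) (R u ξ) : ℂ) = τ (φ u * star u) := by
    calc (inner ℂ (L u ξ) (R u ξ) : ℂ)
        = (starRingEnd ℂ) (inner ℂ (R u ξ) (L u ξ) : ℂ) := (inner_conj_symm _ _).symm
      _ = (starRingEnd ℂ) (inner ℂ ξ (R (star u) (L u ξ)) : ℂ) := by rw [hRstar]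
      _ = (starRingEnd ℂ) (inner ℂ ξ (L u (R (star u) ξ)) : ℂ) := by rw [hcomm]
      _ = inner ℂ (L u (R (star u) ξ)) ξ := inner_conj_symm _ _
      _ = τ (φ u * star u) := (hφdef u (star u)).symm
  have hip2 : τ (φ (star u) * u) = (starRingEnd ℂ) (τ (φ u * star u)) := by
    rw [hφdef (star u) u]
    calc (inner ℂ (L (star u) (R u ξ)) ξ : ℂ)
        = inner ℂ (R u ξ) (L (star (star u)) ξ) := hLstar _ _ _
      _ = inner ℂ (R u ξ) (L u ξ) := by rw [star_star]
      _ = (starRingEnd ℂ) (inner ℂ (L u ξ) (R u ξ) : ℂ) := (inner_conj_symm _ _).symm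
      _ = (starRingEnd ℂ) (τ (φ u * star u)) := by rw [hip]
  -- complete positivity applied to the 2×2 matrix [[1, u], [u*, 1]]
  obtain ⟨z, hz⟩ := hφ 2 (Matrix.of ![![1, u], ![star u, 1]])
    ⟨Matrix.of ![![1, u], ![0, 0]], by
      ext i j
      fin_cases i <;> fin_cases j <;>
        simp [Matrix.mul_apply, Fin.sum_univ_two, Matrix.star_apply, hu1]⟩
  have h00 := congrFun (congrFun hz 0) 0
  have h01 := congrFun (congrFun hz 0) 1
  have h10 := congrFun (congrFun hz 1) 0
  have h11 := congrFun (congrFun hz 1) 1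
  simp only [Matrix.map_apply, Matrix.mul_apply, Fin.sum_univ_two, Matrix.star_apply,
    Matrix.cons_val', Matrix.cons_val_zero, Matrix.cons_val_one, Matrix.head_cons,
    Matrix.empty_val', Matrix.cons_val_fin_one, Matrix.head_fin_const, Matrix.of_apply] at h00 h01 h10 h11
  have rot : ∀ p q r s : A, τ (p * (q * (r * s))) = τ (q * (r * (s * p))) := by
    intro p q r s
    rw [cyc p (q * (r * s))]
    exact congrArg τ (by simp only [mul_assoc])
  have term : ∀ p q r s : A,
      τ (star (p * star q - r * star s) * (p * star q - r * star s))
        = τ (star p * (p * (star q * q))) - τ (star p * (r * (star s * q)))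
          - τ (star r * (p * (star q * s))) + τ (star r * (r * (star s * s))) := by
    intro p q r s
    have e : star (p * star q - r * star s) * (p * star q - r * star s)
        = q * (star p * (p * star q)) - q * (star p * (r * star s))
          - s * (star r * (p * star q)) + s * (star r * (r * star s)) := by
      simp only [star_sub, star_mul, star_star]
      noncomm_ring
    rw [e]
    simp only [map_add, map_sub]
    rw [rot q (star p) p (star q), rot q (star p) r (star s),
      rot s (star r) p (star q), rot s (star r) r (star s)]
  have hstarb : star (φ u) = φ (star u) := by
    rw [h01, h10]
    simp only [star_add, star_mul, star_star]
  have hkey : (τ (star (φ u) * φ u)).re ≤ (τ (star (φ 1) * φ 1)).re := by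
    have t00 := term (z 0 1) (z 0 1) (z 0 0) (z 0 0)
    have t01 := term (z 1 1) (z 0 1) (z 1 0) (z 0 0)
    have t10 := term (z 0 1) (z 1 1) (z 0 0) (z 1 0)
    have t11 := term (z 1 1) (z 1 1) (z 1 0) (z 1 0)
    have e1 : τ (star (φ 1) * φ 1)
        = τ (star (z 0 1) * (z 0 1 * (star (z 0 1) * z 0 1)))
          + τ (star (z 0 1) * (z 0 1 * (star (z 1 1) * z 1 1)))
          + τ (star (z 1 1) * (z 1 1 * (star (z 0 1) * z 0 1)))
          + τ (star (z 1 1) * (z 1 1 * (star (z 1 1) * z 1 1))) := by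
      rw [h11]
      simp only [star_add, star_mul, star_star, add_mul, mul_add, mul_assoc, map_add]
      ring
    have e2 : τ (star (φ 1) * φ 1)
        = τ (star (z 0 0) * (z 0 0 * (star (z 0 0) * z 0 0)))
          + τ (star (z 0 0) * (z 0 0 * (star (z 1 0) * z 1 0)))
          + τ (star (z 1 0) * (z 1 0 * (star (z 0 0) * z 0 0)))
          + τ (star (z 1 0) * (z 1 0 * (star (z 1 0) * z 1 0))) := by
      rw [h00]
      simp only [star_add, star_mul, star_star, add_mul, mul_add, mul_assoc, map_add]
      ring
    have e3 : τ (star (φ u) * φ u)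
        = τ (star (z 0 1) * (z 0 0 * (star (z 0 0) * z 0 1)))
          + τ (star (z 0 1) * (z 0 0 * (star (z 1 0) * z 1 1)))
          + τ (star (z 1 1) * (z 1 0 * (star (z 0 0) * z 0 1)))
          + τ (star (z 1 1) * (z 1 0 * (star (z 1 0) * z 1 1))) := by
      rw [hstarb, h10, h01]
      simp only [add_mul, mul_add, mul_assoc, map_add]
      ring
    have e4 : τ (φ u * star (φ u))
        = τ (star (z 0 0) * (z 0 1 * (star (z 0 1) * z 0 0)))
          + τ (star (z 0 0) * (z 0 1 * (star (z 1 1) * z 1 0)))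
          + τ (star (z 1 0) * (z 1 1 * (star (z 0 1) * z 0 0)))
          + τ (star (z 1 0) * (z 1 1 * (star (z 1 1) * z 1 0))) := by
      rw [hstarb, h01, h10]
      simp only [add_mul, mul_add, mul_assoc, map_add]
      ring
    have hTot : τ (star (z 0 1 * star (z 0 1) - z 0 0 * star (z 0 0))
          * (z 0 1 * star (z 0 1) - z 0 0 * star (z 0 0)))
        + τ (star (z 1 1 * star (z 0 1) - z 1 0 * star (z 0 0))
          * (z 1 1 * star (z 0 1) - z 1 0 * star (z 0 0)))
        + τ (star (z 0 1 * star (z 1 1) - z 0 0 * star (z 1 0))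
          * (z 0 1 * star (z 1 1) - z 0 0 * star (z 1 0)))
        + τ (star (z 1 1 * star (z 1 1) - z 1 0 * star (z 1 0))
          * (z 1 1 * star (z 1 1) - z 1 0 * star (z 1 0)))
        = τ (star (φ 1) * φ 1) + τ (star (φ 1) * φ 1)
          - τ (star (φ u) * φ u) - τ (star (φ u) * φ u) := by
      have hc : τ (φ u * star (φ u)) = τ (star (φ u) * φ u) := cyc _ _
      linear_combination t00 + t01 + t10 + t11 - e1 - e2 + e3 + e4 - hc
    have p1 := posre (z 0 1 * star (z 0 1) - z 0 0 * star (z 0 0))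
    have p2 := posre (z 1 1 * star (z 0 1) - z 1 0 * star (z 0 0))
    have p3 := posre (z 0 1 * star (z 1 1) - z 0 0 * star (z 1 0))
    have p4 := posre (z 1 1 * star (z 1 1) - z 1 0 * star (z 1 0))
    have hre := congrArg Complex.re hTot
    simp only [Complex.add_re, Complex.sub_re] at hre
    linarith
  -- expansion of the 2-norm of φ u - u
  have hexp : τ (star (φ u - u) * (φ u - u))
      = τ (star (φ u) * φ u) - τ (star (φ u) * u) - τ (star u * φ u) + τ (star u * u) := by
    have e : star (φ u - u) * (φ u - u)
        = star (φ u) * φ u - star (φ u) * u - star u * φ u + star u * u := by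
      simp only [star_sub]
      noncomm_ring
    rw [e]
    simp only [map_add, map_sub]
  have hbu : (τ (star (φ u) * u)).re = (τ (φ u * star u)).re := by
    rw [hstarb, hip2, Complex.conj_re]
  have hub : τ (star u * φ u) = τ (φ u * star u) := cyc _ _
  have hL2 : trNorm2 τ (φ u - u) ^ 2 = (τ (star (φ u - u) * (φ u - u))).re :=
    Real.sq_sqrt (posre _)
  have hA2 : trNorm2 τ (φ 1) ^ 2 = (τ (star (φ 1) * φ 1)).re :=
    Real.sq_sqrt (posre _)
  have hN : ‖L u ξ - R u ξ‖ ^ 2 = 2 - 2 * (τ (φ u * star u)).re := by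
    rw [norm_sub_sq (𝕜 := ℂ), hnLu, hnRu, hip]
    simp only [RCLike.re_to_complex]
    ring
  rw [hL2, hA2, hN, hexp, hu1, hτ.unital]
  simp only [Complex.add_re, Complex.sub_re, Complex.one_re]
  rw [hub]
  linarith
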